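/- Let n ≥ 2. In the root system of type C_n, the minimum, over simple roots α_k ∈ Π (1 ≤ k ≤ n), of the resonant codimension of Π ∖ {α_k} equals 2n − 1. -/

import Mathlib

noncomputable def ee (n : ℕ) (i : Fin n) : Fin n → ℝ := Pi.single i 1

def SpS (n : ℕ) : Set (Fin n → ℝ) :=
  {v | (∃ i j : Fin n, i < j ∧ (v = ee n i - ee n j ∨ v = ee n i + ee n j)) ∨
    ∃ i : Fin n, v = (2 : ℝ) • ee n i}

noncomputable def al (n : ℕ) (k : Fin n) : Fin n → ℝ :=
  if h : (k : ℕ) + 1 < n then ee n k - ee n ⟨(k : ℕ) + 1, h⟩ else (2 : ℝ) • ee n k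

noncomputable def phi (n : ℕ) (k : Fin n) : (Fin n → ℝ) →ₗ[ℝ] ℝ :=
  ∑ i ∈ Finset.univ.filter (fun i : Fin n => (i : ℕ) ≤ (k : ℕ)), LinearMap.proj i

lemma ee_app (n : ℕ) (i j : Fin n) : ee n i j = if j = i then 1 else 0 := by
  simp [ee, Pi.single_apply]

lemma ee_inj (n : ℕ) {i j : Fin n} (h : ee n i = ee n j) : i = j := by
  by_contra hne
  have := congrFun h i
  simp [ee_app, hne] at this

lemma phi_ee (n : ℕ) (k j : Fin n) :
    phi n k (ee n j) = if (j : ℕ) ≤ (k : ℕ) then 1 else 0 := by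
  simp only [phi, LinearMap.sum_apply, LinearMap.proj_apply, ee_app]
  rw [Finset.sum_ite_eq' _ j (fun _ => (1 : ℝ))]
  simp

lemma phi_al (n : ℕ) (k j : Fin n) (hjk : j ≠ k) : phi n k (al n j) = 0 := by
  have hv : (j : ℕ) ≠ (k : ℕ) := fun h => hjk (Fin.ext h)
  unfold al
  split
  · rename_i h
    rw [map_sub, phi_ee, phi_ee]
    simp only [Fin.val_mk]
    rcases lt_or_gt_of_ne hv with h1 | h1
    · rw [if_pos (by omega), if_pos (by omega)]; ring
    · rw [if_neg (by omega), if_neg (by omega)]; ring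
  · rename_i h
    rw [map_smul, phi_ee, if_neg (by omega : ¬ (j : ℕ) ≤ (k : ℕ))]
    simp

lemma span_le_ker (n : ℕ) (k : Fin n) :
    Submodule.span ℝ (Set.range (al n) \ {al n k}) ≤ LinearMap.ker (phi n k) := by
  rw [Submodule.span_le]
  rintro v ⟨⟨j, rfl⟩, hne⟩
  have hjk : j ≠ k := by rintro rfl; exact hne rfl
  simpa [LinearMap.mem_ker] using phi_al n k j hjk

noncomputable def gg (n : ℕ) (k : Fin n) : Fin n ⊕ Fin (n - 1) → (Fin n → ℝ)
  | .inl m => if (m : ℕ) = 0 then (2 : ℝ) • ee n ⟨0, m.pos⟩ else ee n ⟨0, m.pos⟩ + ee n m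
  | .inr m => if (m : ℕ) + 1 ≤ (k : ℕ) then
        (2 : ℝ) • ee n ⟨(m : ℕ) + 1, by have := m.isLt; omega⟩
      else ee n ⟨0, by have := m.isLt; omega⟩ - ee n ⟨(m : ℕ) + 1, by have := m.isLt; omega⟩

lemma gg_mem (n : ℕ) (k : Fin n) (x : Fin n ⊕ Fin (n - 1)) : gg n k x ∈ SpS n := by
  rcases x with m | m
  · by_cases hm : (m : ℕ) = 0
    · right; exact ⟨⟨0, m.pos⟩, by simp [gg, hm]⟩
    · left
      refine ⟨⟨0, m.pos⟩, m, ?_, Or.inr (by simp [gg, hm])⟩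
      exact Fin.mk_lt_of_lt_val (by omega)
  · by_cases hm : (m : ℕ) + 1 ≤ (k : ℕ)
    · right
      exact ⟨⟨(m : ℕ) + 1, by have := m.isLt; omega⟩, by simp [gg, hm]⟩
    · left
      refine ⟨⟨0, by have := m.isLt; omega⟩, ⟨(m : ℕ) + 1, by have := m.isLt; omega⟩,
        by simp [Fin.lt_def], Or.inl (by simp [gg, hm])⟩

lemma phi_gg_ne (n : ℕ) (k : Fin n) (x : Fin n ⊕ Fin (n - 1)) : phi n k (gg n k x) ≠ 0 := by
  rcases x with m | m
  · by_cases hm : (m : ℕ) = 0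
    · simp only [gg, if_pos hm, map_smul, phi_ee]
      norm_num
    · simp only [gg, if_neg hm, map_add, phi_ee]
      rw [if_pos (Nat.zero_le _)]
      split <;> norm_num
  · by_cases hm : (m : ℕ) + 1 ≤ (k : ℕ)
    · simp only [gg, if_pos hm, map_smul, phi_ee, Fin.val_mk, if_pos hm]
      norm_num
    · simp only [gg, if_neg hm, map_sub, phi_ee, Fin.val_mk]
      norm_num

lemma gg_inj (n : ℕ) (k : Fin n) : Function.Injective (gg n k) := by
  rintro (m | m) (m' | m') h
  · by_cases hm : (m : ℕ) = 0 <;> by_cases hm' : (m' : ℕ) = 0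
    · exact congrArg _ (Fin.ext (hm.trans hm'.symm))
    · exfalso
      have h0 := congrFun h ⟨0, m.pos⟩
      simp [gg, hm, hm', ee_app, Fin.ext_iff] at h0
      split_ifs at h0 <;> first | omega | norm_num at h0
    · exfalso
      have h0 := congrFun h ⟨0, m.pos⟩
      simp [gg, hm, hm', ee_app, Fin.ext_iff] at h0
      split_ifs at h0 <;> first | omega | norm_num at h0
    · simp only [gg, if_neg hm, if_neg hm'] at h
      have := add_left_cancel h
      exact congrArg _ (ee_inj n this)
  · exfalso
    by_cases hm : (m : ℕ) = 0 <;> by_cases hm' : (m' : ℕ) + 1 ≤ (k : ℕ) <;>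
    · have h0 := congrFun h ⟨0, m.pos⟩
      have h1 := congrFun h ⟨(m' : ℕ) + 1, by have := m'.isLt; omega⟩
      simp [gg, hm, hm', ee_app, Fin.ext_iff] at h0 h1
      all_goals (try split_ifs at h0 h1) <;> first | omega | (norm_num at h0; done) | (norm_num at h1; done) | simp_all
  · exfalso
    by_cases hm' : (m' : ℕ) = 0 <;> by_cases hm : (m : ℕ) + 1 ≤ (k : ℕ) <;>
    · have h0 := congrFun h ⟨0, m'.pos⟩
      have h1 := congrFun h ⟨(m : ℕ) + 1, by have := m.isLt; omega⟩
      simp [gg, hm, hm', ee_app, Fin.ext_iff] at h0 h1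
      all_goals (try split_ifs at h0 h1) <;> first | omega | (norm_num at h0; done) | (norm_num at h1; done) | simp_all
  · have hv : (m : ℕ) = (m' : ℕ) → Sum.inr (α := Fin n) m = Sum.inr m' := by
      intro hh; exact congrArg _ (Fin.ext hh)
    by_cases hm : (m : ℕ) + 1 ≤ (k : ℕ) <;> by_cases hm' : (m' : ℕ) + 1 ≤ (k : ℕ) <;>
    · have h1 := congrFun h ⟨(m : ℕ) + 1, by have := m.isLt; omega⟩
      have h2 := congrFun h ⟨(m' : ℕ) + 1, by have := m'.isLt; omega⟩
      simp [gg, hm, hm', ee_app, Fin.ext_iff] at h1 h2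
      apply hv
      all_goals (try split_ifs at h1 h2) <;> first | omega | (norm_num at h1) | (norm_num at h2) | (norm_num at h1 h2 <;> omega)

lemma sps_finite (n : ℕ) : (SpS n).Finite := by
  have : SpS n ⊆ ⋃ i : Fin n, ⋃ j : Fin n,
      ({ee n i - ee n j, ee n i + ee n j, (2:ℝ) • ee n i} : Set (Fin n → ℝ)) := by
    rintro v (⟨i, j, _, h | h⟩ | ⟨i, h⟩)
    · exact Set.mem_iUnion.2 ⟨i, Set.mem_iUnion.2 ⟨j, by simp [h]⟩⟩
    · exact Set.mem_iUnion.2 ⟨i, Set.mem_iUnion.2 ⟨j, by simp [h]⟩⟩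
    · exact Set.mem_iUnion.2 ⟨i, Set.mem_iUnion.2 ⟨i, by simp [h]⟩⟩
  exact Set.Finite.subset (Set.finite_iUnion fun i => Set.finite_iUnion fun j => by
    apply Set.toFinite) this

lemma ncard_range_gg (n : ℕ) (hn : 2 ≤ n) (k : Fin n) :
    (Set.range (gg n k)).ncard = 2 * n - 1 := by
  rw [← Set.image_univ, Set.ncard_image_of_injective _ (gg_inj n k), Set.ncard_univ]
  simp only [Nat.card_eq_fintype_card, Fintype.card_sum, Fintype.card_fin]
  omega

lemma lower (n : ℕ) (hn : 2 ≤ n) (k : Fin n) :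
    2 * n - 1 ≤ {v | v ∈ SpS n ∧ v ∉ Submodule.span ℝ (Set.range (al n) \ {al n k})}.ncard := by
  rw [← ncard_range_gg n hn k]
  apply Set.ncard_le_ncard
  · rintro v ⟨x, rfl⟩
    refine ⟨gg_mem n k x, fun hmem => ?_⟩
    exact phi_gg_ne n k x (by simpa [LinearMap.mem_ker] using span_le_ker n k hmem)
  · exact (sps_finite n).subset (fun v hv => hv.1)

lemma al_apply_zero_ne (n : ℕ) (hn : 2 ≤ n) (j : Fin n) (hj : (j : ℕ) ≠ 0) :
    al n j ≠ al n ⟨0, by omega⟩ := by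
  intro h
  have h0 := congrFun h ⟨0, by omega⟩
  have h1 : (0 : ℕ) + 1 < n := by omega
  unfold al at h0
  rw [dif_pos h1] at h0
  by_cases hlt : (j : ℕ) + 1 < n
  · rw [dif_pos hlt] at h0
    simp [ee_app, Fin.ext_iff, hj] at h0
    omega
  · rw [dif_neg hlt] at h0
    simp [ee_app, Fin.ext_iff, hj] at h0
    split_ifs at h0 <;> first | omega | norm_num at h0

lemma al_mem_diff (n : ℕ) (hn : 2 ≤ n) (j : Fin n) (hj : (j : ℕ) ≠ 0) :
    al n j ∈ Set.range (al n) \ {al n ⟨0, by omega⟩} :=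
  ⟨⟨j, rfl⟩, al_apply_zero_ne n hn j hj⟩

lemma ee_mem_span0 (n : ℕ) (hn : 2 ≤ n) :
    ∀ (m : ℕ) (i : Fin n), n - (i : ℕ) = m → (i : ℕ) ≠ 0 →
      ee n i ∈ Submodule.span ℝ (Set.range (al n) \ {al n ⟨0, by omega⟩}) := by
  intro m
  induction m with
  | zero => intro i h _; exact absurd h (by have := i.isLt; omega)
  | succ m ih =>
    intro i hi h0
    by_cases hlt : (i : ℕ) + 1 < n
    · have h1 : al n i ∈ Submodule.span ℝ (Set.range (al n) \ {al n ⟨0, by omega⟩}) :=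
        Submodule.subset_span (al_mem_diff n hn i h0)
      have h2 := ih ⟨(i : ℕ) + 1, hlt⟩ (by simp; omega) (by simp)
      have heq : ee n i = al n i + ee n ⟨(i : ℕ) + 1, hlt⟩ := by
        unfold al; rw [dif_pos hlt]; ring
      rw [heq]; exact add_mem h1 h2
    · have heq : ee n i = (1/2 : ℝ) • al n i := by
        unfold al; rw [dif_neg hlt, smul_smul]; norm_num
      rw [heq]
      exact Submodule.smul_mem _ _ (Submodule.subset_span (al_mem_diff n hn i h0))

lemma upper_subset (n : ℕ) (hn : 2 ≤ n) :
    {v | v ∈ SpS n ∧ v ∉ Submodule.span ℝ (Set.range (al n) \ {al n ⟨0, by omega⟩})} ⊆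
      Set.range (gg n (⟨0, by omega⟩ : Fin n)) := by
  rintro v ⟨hsp, hns⟩
  have espan : ∀ i : Fin n, (i : ℕ) ≠ 0 →
      ee n i ∈ Submodule.span ℝ (Set.range (al n) \ {al n ⟨0, by omega⟩}) :=
    fun i hi => ee_mem_span0 n hn (n - (i : ℕ)) i rfl hi
  rcases hsp with ⟨i, j, hij, h | h⟩ | ⟨i, h⟩
  · have hj0 : (j : ℕ) ≠ 0 := by have := Fin.lt_def.1 hij; omega
    by_cases hi : (i : ℕ) = 0
    · refine ⟨Sum.inr ⟨(j : ℕ) - 1, by have := j.isLt; omega⟩, ?_⟩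
      have e1 : (⟨(j : ℕ) - 1 + 1, by have := j.isLt; omega⟩ : Fin n) = j :=
        Fin.ext (by simp; omega)
      have e2 : (⟨0, by omega⟩ : Fin n) = i := Fin.ext (by simp [hi])
      simp only [gg, Fin.val_mk]
      rw [if_neg (by omega), h, e1, e2]
    · exact absurd (h ▸ sub_mem (espan i hi) (espan j hj0)) hns
  · have hj0 : (j : ℕ) ≠ 0 := by have := Fin.lt_def.1 hij; omega
    by_cases hi : (i : ℕ) = 0
    · refine ⟨Sum.inl j, ?_⟩
      have e2 : (⟨0, j.pos⟩ : Fin n) = i := Fin.ext (by simp [hi])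
      simp only [gg]
      rw [if_neg hj0, h, e2]
    · exact absurd (h ▸ add_mem (espan i hi) (espan j hj0)) hns
  · by_cases hi : (i : ℕ) = 0
    · refine ⟨Sum.inl ⟨0, by omega⟩, ?_⟩
      have e2 : (⟨0, Fin.pos (⟨0, by omega⟩ : Fin n)⟩ : Fin n) = i := Fin.ext (by simp [hi])
      simp only [gg, Fin.val_mk, if_pos rfl]
      rw [h, e2]
      simp
    · exact absurd (h ▸ Submodule.smul_mem _ _ (espan i hi)) hns

lemma main_lemma (n : ℕ) (hn : 2 ≤ n) :
    (⨅ k : Fin n,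
      {v | v ∈ SpS n ∧ v ∉ Submodule.span ℝ (Set.range (al n) \ {al n k})}.ncard) = 2 * n - 1 := by
  haveI : Nonempty (Fin n) := ⟨⟨0, by omega⟩⟩
  apply le_antisymm
  · refine le_trans (ciInf_le (OrderBot.bddBelow _) (⟨0, by omega⟩ : Fin n)) ?_
    calc {v | v ∈ SpS n ∧ v ∉ Submodule.span ℝ
          (Set.range (al n) \ {al n (⟨0, by omega⟩ : Fin n)})}.ncard
        ≤ (Set.range (gg n (⟨0, by omega⟩ : Fin n))).ncard :=
          Set.ncard_le_ncard (upper_subset n hn) (Set.finite_range _)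
      _ = 2 * n - 1 := ncard_range_gg n hn _
  · exact le_ciInf (lower n hn)

/-- In the root system of type `C_n` (`n ≥ 2`), the minimum over simple roots `α_k` of the
resonant codimension of `Π \ {α_k}` equals `2n - 1`. -/
theorem stmt6 (n : ℕ) (hn : 2 ≤ n) :
    let e : Fin n → (Fin n → ℝ) := fun i => Pi.single i 1
    let Sp : Set (Fin n → ℝ) :=
      {v | (∃ i j : Fin n, i < j ∧ (v = e i - e j ∨ v = e i + e j)) ∨
        ∃ i : Fin n, v = (2 : ℝ) • e i}
    let α : Fin n → (Fin n → ℝ) := fun k =>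
      if h : (k : ℕ) + 1 < n then e k - e ⟨(k : ℕ) + 1, h⟩ else (2 : ℝ) • e k
    let rc : Set (Fin n → ℝ) → ℕ := fun Pi' =>
      Set.ncard {v | v ∈ Sp ∧ v ∉ Submodule.span ℝ Pi'}
    (⨅ k : Fin n, rc (Set.range α \ {α k})) = 2 * n - 1 := by
  intro e Sp α rc
  exact main_lemma n hn
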